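/- Let V be a complex vector space, ψ ∈ V, and let A₁, A₂, B : V → V be linear maps satisfying A₁∘A₁ = id, A₂∘A₂ = id, B∘B = id, A₁∘B = B∘A₁ and A₂∘B = B∘A₂. Let a, b be real numbers with sin a ≠ 0, sin b ≠ 0 and sin(a+b) ≠ 0, and suppose sin(a+b)·(Bψ) = sin a·(A₂ψ) + sin b·(A₁ψ). Then (A₁∘A₂ + A₂∘A₁)ψ = 2cos(a+b)·ψ. -/
import Mathlib


/-- Let `V` be a complex vector space, `ψ ∈ V`, and let
`A₁, A₂, B : V → V` be linear maps with `A₁² = A₂² = B² = id`, `A₁B = BA₁` and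
`A₂B = BA₂`. Let `a, b` be reals with `sin a ≠ 0`, `sin b ≠ 0`, `sin(a+b) ≠ 0`, and
suppose `sin(a+b)·(Bψ) = sin a·(A₂ψ) + sin b·(A₁ψ)`. Then
`(A₁A₂ + A₂A₁)ψ = 2cos(a+b)·ψ`. -/
theorem stmt_10 (V : Type*) [AddCommGroup V] [Module ℂ V] (ψ : V)
    (A₁ A₂ B : V →ₗ[ℂ] V)
    (hA₁ : A₁ ∘ₗ A₁ = LinearMap.id) (hA₂ : A₂ ∘ₗ A₂ = LinearMap.id)
    (hB : B ∘ₗ B = LinearMap.id)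
    (hc₁ : A₁ ∘ₗ B = B ∘ₗ A₁) (hc₂ : A₂ ∘ₗ B = B ∘ₗ A₂)
    (a b : ℝ) (ha : Real.sin a ≠ 0) (hb : Real.sin b ≠ 0)
    (hab : Real.sin (a + b) ≠ 0)
    (hrel : (Real.sin (a + b) : ℂ) • B ψ
      = (Real.sin a : ℂ) • A₂ ψ + (Real.sin b : ℂ) • A₁ ψ) :
    (A₁ ∘ₗ A₂ + A₂ ∘ₗ A₁) ψ = (2 * Real.cos (a + b) : ℂ) • ψ := by
  set sa : ℂ := (Real.sin a : ℂ)
  set sb : ℂ := (Real.sin b : ℂ)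
  set sc : ℂ := (Real.sin (a + b) : ℂ)
  have hsa : sa ≠ 0 := Complex.ofReal_ne_zero.mpr ha
  have hsb : sb ≠ 0 := Complex.ofReal_ne_zero.mpr hb
  have hBB : ∀ v, B (B v) = v := fun v => congrFun (congrArg DFunLike.coe hB) v
  have hA₁A₁ : ∀ v, A₁ (A₁ v) = v := fun v => congrFun (congrArg DFunLike.coe hA₁) v
  have hA₂A₂ : ∀ v, A₂ (A₂ v) = v := fun v => congrFun (congrArg DFunLike.coe hA₂) v
  have hc₁' : ∀ v, A₁ (B v) = B (A₁ v) := fun v => congrFun (congrArg DFunLike.coe hc₁) v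
  have hc₂' : ∀ v, A₂ (B v) = B (A₂ v) := fun v => congrFun (congrArg DFunLike.coe hc₂) v
  -- apply B to hrel
  have h1 : sc • ψ = sa • A₂ (B ψ) + sb • A₁ (B ψ) := by
    have := congrArg B hrel
    simpa [map_add, map_smul, hBB, hc₁', hc₂'] using this
  have h2 : (sc * sc) • ψ = sa • A₂ (sc • B ψ) + sb • A₁ (sc • B ψ) := by
    have := congrArg (fun v => sc • v) h1
    simpa [smul_add, smul_smul, map_smul, mul_comm] using this
  rw [hrel] at h2
  have h3 : (sc * sc) • ψ = (sa * sa) • ψ + (sb * sb) • ψ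
      + (sa * sb) • (A₂ (A₁ ψ) + A₁ (A₂ ψ)) := by
    rw [h2]
    simp only [map_add, map_smul, smul_add, smul_smul, hA₁A₁, hA₂A₂]
    module
  have key : (sa * sb) • (A₁ (A₂ ψ) + A₂ (A₁ ψ))
      = (sa * sb) • ((2 * Real.cos (a + b) : ℂ) • ψ) := by
    have htrig : sc * sc - sa * sa - sb * sb = sa * sb * (2 * Real.cos (a + b)) := by
      have hr : Real.sin (a+b) * Real.sin (a+b) - Real.sin a * Real.sin a
          - Real.sin b * Real.sin b = Real.sin a * Real.sin b * (2 * Real.cos (a+b)) := by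
        rw [Real.sin_add, Real.cos_add]
        nlinarith [Real.sin_sq_add_cos_sq a, Real.sin_sq_add_cos_sq b]
      simp only [sa, sb, sc]
      exact_mod_cast congrArg (Complex.ofReal) hr
    have : (sa * sb) • (A₂ (A₁ ψ) + A₁ (A₂ ψ)) = (sc * sc - sa * sa - sb * sb) • ψ := by
      rw [sub_smul, sub_smul, h3]; module
    rw [smul_smul, ← htrig]
    rw [add_comm (A₁ (A₂ ψ))]
    rw [this]
  have hne : sa * sb ≠ 0 := mul_ne_zero hsa hsb
  have := smul_right_injective V hne key
  simpa [LinearMap.add_apply, LinearMap.comp_apply] using this
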